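/- Correctness of the weak spectroscopy game: for every energy e ∈ En∞, every process p, and every set of processes Q, the following are equivalent: (1) there exists a formula φ ∈ HML_srbb with expr(φ) ≤ e that distinguishes p from Q; (2) e ∈ Win_a([p,Q]_a) in the weak spectroscopy energy game G△. -/

import Mathlib

open Classical

noncomputable section

namespace Spectroscopy

/-! ### Energies and declining energy games -/

/-- Energies: 8-dimensional vectors over `ℕ ∪ {∞}`, ordered componentwise. -/
abbrev Energy : Type := Fin 8 → ℕ∞

/-- The `i`-th unit vector. -/
def unitE (i : Fin 8) : Energy := fun k => if k = i then 1 else 0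

/-- The vector with value `v` at position `i` and `0` elsewhere. -/
def onlyAt (i : Fin 8) (v : ℕ∞) : Energy := fun k => if k = i then v else 0

/-- Components of energy updates: `-1`, `0`, or minimum selection `min_D`.
For the component at position `k`, `minWith D` selects the minimum over the
positions `{k} ∪ D`, so the requirement `k ∈ D` of the paper holds by
construction. -/
inductive UpdComp : Type
  | decr : UpdComp
  | zero : UpdComp
  | minWith (D : Finset (Fin 8)) : UpdComp
deriving DecidableEq

/-- Energy updates. -/
abbrev Update : Type := Fin 8 → UpdComp

/-- Partial application of an update to an energy (`none` when a component
would become negative). -/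
def upd (e : Energy) (u : Update) : Option Energy :=
  if ∀ k, u k = UpdComp.decr → e k ≠ 0 then
    some (fun k =>
      match u k with
      | UpdComp.decr => e k - 1
      | UpdComp.zero => e k
      | UpdComp.minWith D => (insert k D).inf e)
  else none

/-- A declining energy game: positions, a defender predicate (attacker
positions are the non-defender ones), and moves labeled with updates. -/
structure EGame (Pos : Type) where
  defender : Pos → Prop
  move : Pos → Update → Pos → Prop

/-- Attacker winning budgets `Win_a`: at an attacker position some move must
lead to an attacker-won position under the updated energy; at a defender
position every move must (be defined and) lead to an attacker-won position. -/
inductive EGame.Win {Pos : Type} (G : EGame Pos) : Pos → Energy → Prop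
  | attack {g : Pos} {u : Update} {g' : Pos} {e e' : Energy} :
      ¬ G.defender g → G.move g u g' → upd e u = some e' → G.Win g' e' →
      G.Win g e
  | defend {g : Pos} {e : Energy} :
      G.defender g →
      (∀ u g', G.move g u g' → upd e u ≠ none) →
      (∀ u g' e', G.move g u g' → upd e u = some e' → G.Win g' e') →
      G.Win g e

/-! ### Labeled transition systems with silent steps -/

section LTS

variable {Proc Act : Type}

/-- Weak internal steps `↠`: reflexive-transitive closure of `τ`-steps. -/
def Star (Tr : Proc → Act → Proc → Prop) (τ : Act) : Proc → Proc → Prop :=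
  Relation.ReflTransGen fun p p' => Tr p τ p'

/-- A process is stable if it has no `τ`-step. -/
def Stable (Tr : Proc → Act → Proc → Prop) (τ : Act) (p : Proc) : Prop :=
  ∀ p', ¬ Tr p τ p'

/-- Optional step `p →(α) p'`: a real `α`-step, or `α = τ` and `p = p'`. -/
def OptStep (Tr : Proc → Act → Proc → Prop) (τ : Act) (p : Proc) (α : Act) (p' : Proc) : Prop :=
  Tr p α p' ∨ (α = τ ∧ p = p')

/-- Lift of `→a` to sets. -/
def SetStep (Tr : Proc → Act → Proc → Prop) (Q : Set Proc) (a : Act) (Q' : Set Proc) : Prop :=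
  Q' = {q' | ∃ q ∈ Q, Tr q a q'}

/-- Lift of `↠` to sets. -/
def SetStar (Tr : Proc → Act → Proc → Prop) (τ : Act) (Q Q' : Set Proc) : Prop :=
  Q' = {q' | ∃ q ∈ Q, Star Tr τ q q'}

/-- Lift of `→(α)` to sets. -/
def SetOpt (Tr : Proc → Act → Proc → Prop) (τ : Act) (Q : Set Proc) (α : Act)
    (Q' : Set Proc) : Prop :=
  Q' = {q' | ∃ q ∈ Q, OptStep Tr τ q α q'}

end LTS

/-! ### The logic HML_srbb -/

mutual
/-- Formulas `φ` of HML_srbb: `⟨ε⟩χ` or immediate conjunctions `⋀Ψ`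
(conjunctions are indexed by an arbitrary type). `⊤` is the empty conjunction. -/
inductive Formula (Act : Type) (τ : Act) : Type 1
  | delayed : DFormula Act τ → Formula Act τ
  | conj : (I : Type) → (I → Conjunct Act τ) → Formula Act τ

/-- Delayed formulas `χ`: observations `⟨a⟩φ` (with `a ≠ τ`), standard
conjunctions `⋀Ψ`, stable conjunctions `⋀({¬⟨τ⟩⊤} ∪ Ψ)`, and branching
conjunctions `⋀({(α)φ} ∪ Ψ)`. -/
inductive DFormula (Act : Type) (τ : Act) : Type 1
  | obs : (a : Act) → a ≠ τ → Formula Act τ → DFormula Act τ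
  | conj : (I : Type) → (I → Conjunct Act τ) → DFormula Act τ
  | stableConj : (I : Type) → (I → Conjunct Act τ) → DFormula Act τ
  | branchConj : (α : Act) → Formula Act τ → (I : Type) → (I → Conjunct Act τ) → DFormula Act τ

/-- Conjuncts `ψ`: positive `⟨ε⟩χ` or negative `¬⟨ε⟩χ`. -/
inductive Conjunct (Act : Type) (τ : Act) : Type 1
  | pos : DFormula Act τ → Conjunct Act τ
  | neg : DFormula Act τ → Conjunct Act τ
end

section Semantics

variable {Proc Act : Type}

mutual
/-- Semantics `⟦φ⟧`. -/
def Sat (Tr : Proc → Act → Proc → Prop) (τ : Act) (p : Proc) : Formula Act τ → Prop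
  | .delayed χ => ∃ p', Star Tr τ p p' ∧ SatD Tr τ p' χ
  | .conj _ ps => ∀ i, SatC Tr τ p (ps i)

/-- Semantics `⟦χ⟧^ε` of delayed formulas. -/
def SatD (Tr : Proc → Act → Proc → Prop) (τ : Act) (p : Proc) : DFormula Act τ → Prop
  | .obs a _ φ => ∃ p', Tr p a p' ∧ Sat Tr τ p' φ
  | .conj _ ps => ∀ i, SatC Tr τ p (ps i)
  | .stableConj _ ps => Stable Tr τ p ∧ ∀ i, SatC Tr τ p (ps i)
  | .branchConj α φ _ ps =>
      (∃ p', OptStep Tr τ p α p' ∧ Sat Tr τ p' φ) ∧ ∀ i, SatC Tr τ p (ps i)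

/-- Semantics `⟦ψ⟧^∧` of conjuncts. -/
def SatC (Tr : Proc → Act → Proc → Prop) (τ : Act) (p : Proc) : Conjunct Act τ → Prop
  | .pos χ => ∃ p', Star Tr τ p p' ∧ SatD Tr τ p' χ
  | .neg χ => ¬ ∃ p', Star Tr τ p p' ∧ SatD Tr τ p' χ
end

/-- `φ` distinguishes `p` from the set `Q`. -/
def Distinguishes (Tr : Proc → Act → Proc → Prop) (τ : Act) (φ : Formula Act τ)
    (p : Proc) (Q : Set Proc) : Prop :=
  Sat Tr τ p φ ∧ ∀ q ∈ Q, ¬ Sat Tr τ q φ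

/-- The delayed formula `χ` distinguishes `p` from the set `Q` w.r.t. `⟦·⟧^ε`. -/
def DistinguishesD (Tr : Proc → Act → Proc → Prop) (τ : Act) (χ : DFormula Act τ)
    (p : Proc) (Q : Set Proc) : Prop :=
  SatD Tr τ p χ ∧ ∀ q ∈ Q, ¬ SatD Tr τ q χ

/-- The conjunct `ψ` distinguishes `p` from `q` w.r.t. `⟦·⟧^∧`. -/
def DistinguishesC (Tr : Proc → Act → Proc → Prop) (τ : Act) (ψ : Conjunct Act τ)
    (p q : Proc) : Prop :=
  SatC Tr τ p ψ ∧ ¬ SatC Tr τ q ψ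

/-- Stability-respecting branching bisimulations: symmetric relations with the
branching-bisimulation transfer property and the stability-respecting
property. -/
def IsSRBBisim (Tr : Proc → Act → Proc → Prop) (τ : Act) (R : Proc → Proc → Prop) : Prop :=
  Symmetric R ∧
  (∀ p q, R p q → ∀ α p', Tr p α p' →
    (α = τ ∧ R p' q) ∨
      ∃ q' q'', Star Tr τ q q' ∧ Tr q' α q'' ∧ R p q' ∧ R p' q'') ∧
  (∀ p q, R p q → Stable Tr τ p →
    ∃ q', Star Tr τ q q' ∧ Stable Tr τ q' ∧ R p q')

end Semantics

/-! ### Expressiveness prices -/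

section Expr

variable {Act : Type} {τ : Act}

mutual
/-- Expressiveness price `expr` of formulas. -/
def exprF : Formula Act τ → Energy
  | .delayed χ => exprE χ
  | .conj I ps => ⨆ _ : Nonempty I, ((unitE 4 + unitE 2) + ⨆ i, exprC (ps i))

/-- Expressiveness price `expr^ε` of delayed formulas. -/
def exprE : DFormula Act τ → Energy
  | .obs _ _ φ => unitE 0 + exprF φ
  | .conj I ps => ⨆ _ : Nonempty I, (unitE 2 + ⨆ i, exprC (ps i))
  | .stableConj _ ps => unitE 3 + ⨆ i, exprC (ps i)
  | .branchConj _ φ _ ps =>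
      (unitE 1 + unitE 2) +
        (((unitE 0 + exprF φ) ⊔ onlyAt 5 (1 + exprF φ 0)) ⊔ ⨆ i, exprC (ps i))

/-- Expressiveness price `expr^∧` of conjuncts. -/
def exprC : Conjunct Act τ → Energy
  | .pos χ => exprE χ ⊔ onlyAt 5 (exprE χ 0)
  | .neg χ => (unitE 7 + exprE χ) ⊔ onlyAt 6 (exprE χ 0)
end

end Expr

/-! ### The weak spectroscopy energy game -/

/-- Positions of the weak spectroscopy game. -/
inductive GPos (Proc Act : Type) : Type
  | att (p : Proc) (Q : Set Proc)                                 -- `[p,Q]_a`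
  | attD (p : Proc) (Q : Set Proc)                                -- `[p,Q]^ε_a`
  | attC (p q : Proc)                                             -- `[p,q]^∧_a`
  | attB (p : Proc) (Q : Set Proc)                                -- `[p,Q]^η_a`
  | defC (p : Proc) (Q : Set Proc)                                -- `(p,Q)_d`
  | defS (p : Proc) (Q : Set Proc)                                -- `(p,Q)^s_d`
  | defB (p : Proc) (α : Act) (p' : Proc) (Q Qa : Set Proc)       -- `(p,α,p',Q,Qa)^η_d`

/-- The zero update. -/
def zeroU : Update := fun _ => UpdComp.zero

/-- The update `-ê_i`. -/
def decU (i : Fin 8) : Update := fun k => if k = i then UpdComp.decr else UpdComp.zero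

/-- The update `(min_{1,6},0,0,0,0,0,0,0)`. -/
def minU16 : Update := fun k => if k = 0 then UpdComp.minWith {5} else UpdComp.zero

/-- The update `(min_{1,7},0,0,0,0,0,0,-1)`. -/
def minU17dec8 : Update := fun k =>
  if k = 0 then UpdComp.minWith {6} else if k = 7 then UpdComp.decr else UpdComp.zero

/-- The update `(0,-1,-1,0,0,0,0,0)`. -/
def dec23 : Update := fun k => if k = 1 ∨ k = 2 then UpdComp.decr else UpdComp.zero

/-- The update `(min_{1,6},-1,-1,0,0,0,0,0)`. -/
def minU16dec23 : Update := fun k =>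
  if k = 0 then UpdComp.minWith {5}
  else if k = 1 ∨ k = 2 then UpdComp.decr else UpdComp.zero

section Game

variable {Proc Act : Type}

/-- Moves of the weak spectroscopy game. -/
inductive GMove (Tr : Proc → Act → Proc → Prop) (τ : Act) :
    GPos Proc Act → Update → GPos Proc Act → Prop
  | delay {p : Proc} {Q Q' : Set Proc} :
      SetStar Tr τ Q Q' →
      GMove Tr τ (.att p Q) zeroU (.attD p Q')
  | procrastination {p p' : Proc} {Q : Set Proc} :
      Tr p τ p' → p ≠ p' →
      GMove Tr τ (.attD p Q) zeroU (.attD p' Q)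
  | observation {p p' : Proc} {a : Act} {Q Q' : Set Proc} :
      Tr p a p' → a ≠ τ → SetStep Tr Q a Q' →
      GMove Tr τ (.attD p Q) (decU 0) (.att p' Q')
  | finishing {p : Proc} :
      GMove Tr τ (.att p ∅) zeroU (.defC p ∅)
  | immediateConj {p : Proc} {Q : Set Proc} :
      Q ≠ ∅ →
      GMove Tr τ (.att p Q) (decU 4) (.defC p Q)
  | lateConj {p : Proc} {Q : Set Proc} :
      GMove Tr τ (.attD p Q) zeroU (.defC p Q)
  | conjAnswer {p q : Proc} {Q : Set Proc} :
      q ∈ Q →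
      GMove Tr τ (.defC p Q) (decU 2) (.attC p q)
  | posConjunct {p q : Proc} {Q : Set Proc} :
      SetStar Tr τ {q} Q →
      GMove Tr τ (.attC p q) minU16 (.attD p Q)
  | negConjunct {p q : Proc} {Q : Set Proc} :
      SetStar Tr τ {p} Q → p ≠ q →
      GMove Tr τ (.attC p q) minU17dec8 (.attD q Q)
  | stableConj {p : Proc} {Q : Set Proc} :
      Stable Tr τ p →
      GMove Tr τ (.attD p Q) zeroU (.defS p {q ∈ Q | Stable Tr τ q})
  | conjStableAnswer {p q : Proc} {Q : Set Proc} :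
      q ∈ Q →
      GMove Tr τ (.defS p Q) (decU 3) (.attC p q)
  | stableFinishing {p : Proc} :
      GMove Tr τ (.defS p ∅) (decU 3) (.defC p ∅)
  | branchConj {p p' : Proc} {α : Act} {Q Qa : Set Proc} :
      OptStep Tr τ p α p' → Qa ⊆ Q →
      GMove Tr τ (.attD p Q) zeroU (.defB p α p' (Q \ Qa) Qa)
  | branchAnswer {p p' q : Proc} {α : Act} {Q Qa : Set Proc} :
      q ∈ Q →
      GMove Tr τ (.defB p α p' Q Qa) dec23 (.attC p q)
  | branchObservation {p p' : Proc} {α : Act} {Q Qa Q' : Set Proc} :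
      SetOpt Tr τ Qa α Q' →
      GMove Tr τ (.defB p α p' Q Qa) minU16dec23 (.attB p' Q')
  | branchAccounting {p : Proc} {Q : Set Proc} :
      GMove Tr τ (.attB p Q) (decU 0) (.att p Q)

/-- Defender positions of the weak spectroscopy game. -/
def isDefender : GPos Proc Act → Prop
  | .defC _ _ => True
  | .defS _ _ => True
  | .defB _ _ _ _ _ => True
  | _ => False

/-- The weak spectroscopy energy game `G△`. -/
def specGame (Tr : Proc → Act → Proc → Prop) (τ : Act) : EGame (GPos Proc Act) where
  defender := isDefender
  move := GMove Tr τ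

end Game

/-! ### Strategy formulas -/

section Strat

variable {Proc Act : Type}

mutual
/-- Attacker strategy formulas (formula sort). -/
inductive StratF (Tr : Proc → Act → Proc → Prop) (τ : Act) :
    GPos Proc Act → Energy → Formula Act τ → Prop
  | delay {p : Proc} {Q Q' : Set Proc} {u : Update} {e e' : Energy} {χ : DFormula Act τ} :
      GMove Tr τ (.att p Q) u (.attD p Q') →
      upd e u = some e' →
      (specGame Tr τ).Win (.attD p Q') e' →
      StratD Tr τ (.attD p Q') e' χ →
      StratF Tr τ (.att p Q) e (.delayed χ)
  | immediateConj {p : Proc} {Q : Set Proc} {u : Update} {e e' : Energy}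
      {I : Type} {ps : I → Conjunct Act τ} :
      GMove Tr τ (.att p Q) u (.defC p Q) →
      upd e u = some e' →
      (specGame Tr τ).Win (.defC p Q) e' →
      StratD Tr τ (.defC p Q) e' (.conj I ps) →
      StratF Tr τ (.att p Q) e (.conj I ps)

/-- Attacker strategy formulas (delayed-formula sort). -/
inductive StratD (Tr : Proc → Act → Proc → Prop) (τ : Act) :
    GPos Proc Act → Energy → DFormula Act τ → Prop
  | procrastination {p p' : Proc} {Q : Set Proc} {u : Update} {e e' : Energy}
      {χ : DFormula Act τ} :
      GMove Tr τ (.attD p Q) u (.attD p' Q) →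
      upd e u = some e' →
      (specGame Tr τ).Win (.attD p' Q) e' →
      StratD Tr τ (.attD p' Q) e' χ →
      StratD Tr τ (.attD p Q) e χ
  | observation {p p' : Proc} {a : Act} {Q Q' : Set Proc} {u : Update} {e e' : Energy}
      {φ : Formula Act τ} (ha : a ≠ τ) :
      GMove Tr τ (.attD p Q) u (.att p' Q') →
      Tr p a p' → SetStep Tr Q a Q' →
      upd e u = some e' →
      (specGame Tr τ).Win (.att p' Q') e' →
      StratF Tr τ (.att p' Q') e' φ →
      StratD Tr τ (.attD p Q) e (.obs a ha φ)
  | lateConj {p : Proc} {Q : Set Proc} {u : Update} {e e' : Energy} {χ : DFormula Act τ} :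
      GMove Tr τ (.attD p Q) u (.defC p Q) →
      upd e u = some e' →
      (specGame Tr τ).Win (.defC p Q) e' →
      StratD Tr τ (.defC p Q) e' χ →
      StratD Tr τ (.attD p Q) e χ
  | stable {p : Proc} {Q Q' : Set Proc} {u : Update} {e e' : Energy} {χ : DFormula Act τ} :
      GMove Tr τ (.attD p Q) u (.defS p Q') →
      upd e u = some e' →
      (specGame Tr τ).Win (.defS p Q') e' →
      StratD Tr τ (.defS p Q') e' χ →
      StratD Tr τ (.attD p Q) e χ
  | branch {p p' : Proc} {α : Act} {Q Q' Qa : Set Proc} {u : Update} {e e' : Energy}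
      {χ : DFormula Act τ} :
      GMove Tr τ (.attD p Q) u (.defB p α p' Q' Qa) →
      upd e u = some e' →
      (specGame Tr τ).Win (.defB p α p' Q' Qa) e' →
      StratD Tr τ (.defB p α p' Q' Qa) e' χ →
      StratD Tr τ (.attD p Q) e χ
  | conj {p : Proc} {Q : Set Proc} {e : Energy}
      (us : {q // q ∈ Q} → Update) (es : {q // q ∈ Q} → Energy)
      (ψs : {q // q ∈ Q} → Conjunct Act τ) :
      (∀ qq : {q // q ∈ Q}, GMove Tr τ (.defC p Q) (us qq) (.attC p qq.1)) →
      (∀ qq : {q // q ∈ Q}, upd e (us qq) = some (es qq)) →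
      (∀ qq : {q // q ∈ Q}, (specGame Tr τ).Win (.attC p qq.1) (es qq)) →
      (∀ qq : {q // q ∈ Q}, StratC Tr τ (.attC p qq.1) (es qq) (ψs qq)) →
      StratD Tr τ (.defC p Q) e (.conj {q // q ∈ Q} ψs)
  | stableConj {p : Proc} {Q : Set Proc} {e : Energy}
      (hne : Q.Nonempty)
      (us : {q // q ∈ Q} → Update) (es : {q // q ∈ Q} → Energy)
      (ψs : {q // q ∈ Q} → Conjunct Act τ) :
      (∀ qq : {q // q ∈ Q}, GMove Tr τ (.defS p Q) (us qq) (.attC p qq.1)) →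
      (∀ qq : {q // q ∈ Q}, upd e (us qq) = some (es qq)) →
      (∀ qq : {q // q ∈ Q}, (specGame Tr τ).Win (.attC p qq.1) (es qq)) →
      (∀ qq : {q // q ∈ Q}, StratC Tr τ (.attC p qq.1) (es qq) (ψs qq)) →
      StratD Tr τ (.defS p Q) e (.stableConj {q // q ∈ Q} ψs)
  | stableFinish {p : Proc} {u : Update} {e e' : Energy} :
      GMove Tr τ (.defS p ∅) u (.defC p ∅) →
      upd e u = some e' →
      (specGame Tr τ).Win (.defC p (∅ : Set Proc)) e' →
      StratD Tr τ (.defS p ∅) e (.stableConj Empty fun x => x.elim)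
  | branchConj {p p' : Proc} {α : Act} {Q Qa Q' : Set Proc} {ua ua' : Update}
      {e e1 ea : Energy} {φa : Formula Act τ}
      (us : {q // q ∈ Q} → Update) (es : {q // q ∈ Q} → Energy)
      (ψs : {q // q ∈ Q} → Conjunct Act τ) :
      GMove Tr τ (.defB p α p' Q Qa) ua (.attB p' Q') →
      GMove Tr τ (.attB p' Q') ua' (.att p' Q') →
      upd e ua = some e1 →
      upd e1 ua' = some ea →
      (specGame Tr τ).Win (.att p' Q') ea →
      StratF Tr τ (.att p' Q') ea φa →
      (∀ qq : {q // q ∈ Q}, GMove Tr τ (.defB p α p' Q Qa) (us qq) (.attC p qq.1)) →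
      (∀ qq : {q // q ∈ Q}, upd e (us qq) = some (es qq)) →
      (∀ qq : {q // q ∈ Q}, (specGame Tr τ).Win (.attC p qq.1) (es qq)) →
      (∀ qq : {q // q ∈ Q}, StratC Tr τ (.attC p qq.1) (es qq) (ψs qq)) →
      StratD Tr τ (.defB p α p' Q Qa) e (.branchConj α φa {q // q ∈ Q} ψs)

/-- Attacker strategy formulas (conjunct sort). -/
inductive StratC (Tr : Proc → Act → Proc → Prop) (τ : Act) :
    GPos Proc Act → Energy → Conjunct Act τ → Prop
  | pos {p q : Proc} {Q' : Set Proc} {u : Update} {e e' : Energy} {χ : DFormula Act τ} :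
      GMove Tr τ (.attC p q) u (.attD p Q') →
      upd e u = some e' →
      (specGame Tr τ).Win (.attD p Q') e' →
      StratD Tr τ (.attD p Q') e' χ →
      StratC Tr τ (.attC p q) e (.pos χ)
  | neg {p q : Proc} {P' : Set Proc} {u : Update} {e e' : Energy} {χ : DFormula Act τ} :
      GMove Tr τ (.attC p q) u (.attD q P') →
      upd e u = some e' →
      (specGame Tr τ).Win (.attD q P') e' →
      StratD Tr τ (.attD q P') e' χ →
      StratC Tr τ (.attC p q) e (.neg χ)
end

end Strat

/-! ### Auxiliary lemmas -/

section Aux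

lemma enat_one_add_sub_one (a : ℕ∞) : 1 + a - 1 = a := by
  induction a using ENat.recTopCoe with
  | top => simp
  | coe n => rw [← Nat.cast_one, ← Nat.cast_add, ← ENat.coe_sub]; simp

lemma enat_add_sub_one (a : ℕ∞) (h : a ≠ 0) : 1 + (a - 1) = a := by
  rw [add_comm]; exact tsub_add_cancel_of_le (ENat.one_le_iff_ne_zero.mpr h)

lemma enat_ne_zero_mono {a b : ℕ∞} (h : a ≤ b) (h0 : a ≠ 0) : b ≠ 0 :=
  fun hb => h0 (le_antisymm (hb ▸ h) (zero_le))

lemma enat_one_le {a : ℕ∞} (h : a ≠ 0) : 1 ≤ a := ENat.one_le_iff_ne_zero.mpr h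

/-- The canonical result of an update. -/
def updRes (e : Energy) (u : Update) : Energy := fun k =>
  match u k with
  | UpdComp.decr => e k - 1
  | UpdComp.zero => e k
  | UpdComp.minWith D => (insert k D).inf e

lemma upd_of {e : Energy} {u : Update} (h : ∀ k, u k = UpdComp.decr → e k ≠ 0) :
    upd e u = some (updRes e u) := by
  unfold upd; rw [if_pos h]; rfl

lemma upd_some {e : Energy} {u : Update} {f : Energy} (h : upd e u = some f) :
    (∀ k, u k = UpdComp.decr → e k ≠ 0) ∧ f = updRes e u := by
  unfold upd at h
  split at h
  · exact ⟨by assumption, (Option.some.inj h).symm⟩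
  · cases h

lemma upd_ne_none {e : Energy} {u : Update} (h : upd e u ≠ none) :
    ∃ f, upd e u = some f := Option.ne_none_iff_exists'.mp h

lemma upd_mono {e e' : Energy} {u : Update} {f : Energy} (hle : e ≤ e')
    (h : upd e u = some f) : ∃ f', upd e' u = some f' ∧ f ≤ f' := by
  obtain ⟨hc, rfl⟩ := upd_some h
  refine ⟨updRes e' u, upd_of fun k hk => enat_ne_zero_mono (hle k) (hc k hk), fun k => ?_⟩
  unfold updRes
  cases hu : u k with
  | decr => exact tsub_le_tsub_right (hle k) 1
  | zero => exact hle k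
  | minWith D => exact Finset.inf_mono_fun fun i _ => hle i

lemma win_mono {Pos : Type} {G : EGame Pos} {g : Pos} {e : Energy}
    (h : G.Win g e) : ∀ e', e ≤ e' → G.Win g e' := by
  induction h with
  | @attack g u g' e f hnd mv hupd _ ih =>
      intro e' hle
      obtain ⟨f', hupd', hff⟩ := upd_mono hle hupd
      exact .attack hnd mv hupd' (ih f' hff)
  | @defend g e hd hdef _ ih =>
      intro e' hle
      refine .defend hd (fun u g' mv => ?_) (fun u g' f' mv hupd' => ?_)
      · obtain ⟨f, hf⟩ := upd_ne_none (hdef u g' mv)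
        obtain ⟨f'', hupd'', _⟩ := upd_mono hle hf
        rw [hupd'']; exact (Option.some_ne_none _)
      · obtain ⟨f, hf⟩ := upd_ne_none (hdef u g' mv)
        obtain ⟨f'', hupd'', hff⟩ := upd_mono hle hf
        rw [hupd'] at hupd''
        cases Option.some.inj hupd''
        exact ih u g' f mv hf f' hff

lemma upd_zeroU (e : Energy) : upd e zeroU = some e := by
  rw [upd_of (fun k hk => by simp [zeroU] at hk)]
  congr 1

lemma updRes_zeroU (e : Energy) : updRes e zeroU = e := rfl

lemma updRes_decU (e : Energy) (i : Fin 8) :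
    updRes e (decU i) = fun k => if k = i then e k - 1 else e k := by
  funext k; unfold updRes decU
  by_cases h : k = i <;> simp [h]

lemma upd_decU {e : Energy} {i : Fin 8} (h : e i ≠ 0) :
    upd e (decU i) = some (fun k => if k = i then e k - 1 else e k) := by
  rw [upd_of, updRes_decU]
  intro k hk
  unfold decU at hk
  split at hk
  · cases ‹k = i›; exact h
  · cases hk

lemma finInf_pair (e : Energy) (i j : Fin 8) : (insert i ({j} : Finset (Fin 8))).inf e = e i ⊓ e j := by
  simp

lemma updRes_minU16 (e : Energy) :
    updRes e minU16 = fun k => if k = 0 then e 0 ⊓ e 5 else e k := by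
  funext k; unfold updRes minU16
  by_cases h : k = 0 <;> simp [h]

lemma upd_minU16 (e : Energy) :
    upd e minU16 = some (fun k => if k = 0 then e 0 ⊓ e 5 else e k) := by
  rw [upd_of, updRes_minU16]
  intro k hk; unfold minU16 at hk
  split at hk <;> cases hk

lemma updRes_minU17dec8 (e : Energy) :
    updRes e minU17dec8 =
      fun k => if k = 0 then e 0 ⊓ e 6 else if k = 7 then e k - 1 else e k := by
  funext k; unfold updRes minU17dec8
  by_cases h0 : k = 0
  · simp [h0]
  · by_cases h7 : k = 7 <;> simp [h0, h7]

lemma upd_minU17dec8 {e : Energy} (h : e 7 ≠ 0) :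
    upd e minU17dec8 =
      some (fun k => if k = 0 then e 0 ⊓ e 6 else if k = 7 then e k - 1 else e k) := by
  rw [upd_of, updRes_minU17dec8]
  intro k hk; unfold minU17dec8 at hk
  split at hk
  · cases hk
  · split at hk
    · cases ‹k = 7›; exact h
    · cases hk

lemma updRes_dec23 (e : Energy) :
    updRes e dec23 = fun k => if k = 1 ∨ k = 2 then e k - 1 else e k := by
  funext k; unfold updRes dec23
  by_cases h : k = 1 ∨ k = 2 <;> simp [h]

lemma upd_dec23 {e : Energy} (h1 : e 1 ≠ 0) (h2 : e 2 ≠ 0) :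
    upd e dec23 = some (fun k => if k = 1 ∨ k = 2 then e k - 1 else e k) := by
  rw [upd_of, updRes_dec23]
  intro k hk; unfold dec23 at hk
  split at hk
  · rcases ‹k = 1 ∨ k = 2› with h | h <;> (cases h; assumption)
  · cases hk

lemma updRes_minU16dec23 (e : Energy) :
    updRes e minU16dec23 =
      fun k => if k = 0 then e 0 ⊓ e 5 else if k = 1 ∨ k = 2 then e k - 1 else e k := by
  funext k; unfold updRes minU16dec23
  by_cases h0 : k = 0
  · simp [h0]
  · by_cases h : k = 1 ∨ k = 2 <;> simp [h0, h]

lemma upd_minU16dec23 {e : Energy} (h1 : e 1 ≠ 0) (h2 : e 2 ≠ 0) :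
    upd e minU16dec23 =
      some (fun k => if k = 0 then e 0 ⊓ e 5 else if k = 1 ∨ k = 2 then e k - 1 else e k) := by
  rw [upd_of, updRes_minU16dec23]
  intro k hk; unfold minU16dec23 at hk
  split at hk
  · cases hk
  · split at hk
    · rcases ‹k = 1 ∨ k = 2› with h | h <;> (cases h; assumption)
    · cases hk

end Aux


section Clos

variable {Proc Act : Type} {Tr : Proc → Act → Proc → Prop} {τ : Act}

/-- τ-closure of a set of processes. -/
def clos (Tr : Proc → Act → Proc → Prop) (τ : Act) (Q : Set Proc) : Set Proc :=
  {q' | ∃ q ∈ Q, Star Tr τ q q'}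

lemma setStar_clos (Q : Set Proc) : SetStar Tr τ Q (clos Tr τ Q) := rfl

lemma setStar_iff {Q Q' : Set Proc} : SetStar Tr τ Q Q' ↔ Q' = clos Tr τ Q := Iff.rfl

lemma subset_clos (Q : Set Proc) : Q ⊆ clos Tr τ Q :=
  fun q hq => ⟨q, hq, Relation.ReflTransGen.refl⟩

lemma mem_clos_trans {Q : Set Proc} {q q'} (hq : q ∈ clos Tr τ Q) (h : Star Tr τ q q') :
    q' ∈ clos Tr τ Q := by
  obtain ⟨q0, hq0, hs⟩ := hq
  exact ⟨q0, hq0, hs.trans h⟩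

lemma notDef_att {p : Proc} {Q : Set Proc} : ¬ (specGame Tr τ).defender (.att p Q) := fun h => h
lemma notDef_attD {p : Proc} {Q : Set Proc} : ¬ (specGame Tr τ).defender (.attD p Q) := fun h => h
lemma notDef_attC {p q : Proc} : ¬ (specGame Tr τ).defender (.attC p q (Act := Act)) := fun h => h
lemma notDef_attB {p : Proc} {Q : Set Proc} : ¬ (specGame Tr τ).defender (.attB p Q) := fun h => h

lemma isDef_defC {p : Proc} {Q : Set Proc} : (specGame Tr τ).defender (.defC p Q) := trivial
lemma isDef_defS {p : Proc} {Q : Set Proc} : (specGame Tr τ).defender (.defS p Q) := trivial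
lemma isDef_defB {p p' : Proc} {α : Act} {Q Qa : Set Proc} :
    (specGame Tr τ).defender (.defB p α p' Q Qa) := trivial

/-- The attacker can procrastinate along a `↠`-chain without cost. -/
lemma win_procrastinate {p p' : Proc} {Q : Set Proc} {e : Energy}
    (hs : Star Tr τ p p') (h : (specGame Tr τ).Win (.attD p' Q) e) :
    (specGame Tr τ).Win (.attD p Q) e := by
  induction hs using Relation.ReflTransGen.head_induction_on with
  | refl => exact h
  | head step _ ih =>
      rename_i a b _
      by_cases hab : a = b
      · exact hab ▸ ih
      · exact .attack notDef_attD (GMove.procrastination step hab) (upd_zeroU e) ih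

/-- The defender position `(p, ∅)_d` has no moves: the attacker wins with any budget. -/
lemma win_defC_empty (p : Proc) (e : Energy) :
    (specGame Tr τ).Win (.defC p (∅ : Set Proc)) e := by
  refine .defend isDef_defC (fun u g' mv => ?_) (fun u g' e' mv => ?_)
  · cases mv; rename_i hq; cases hq
  · cases mv; rename_i hq; cases hq

end Clos

section EnergyLemmas

lemma enat_one_add_ne_zero (a : ℕ∞) : 1 + a ≠ 0 := by
  simp [add_eq_zero]

lemma unitE_add_self (i : Fin 8) (s : Energy) : (unitE i + s) i = 1 + s i := by
  simp [unitE]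

lemma unitE_add_ne {i k : Fin 8} (s : Energy) (h : k ≠ i) : (unitE i + s) k = s k := by
  simp [unitE, h]

lemma unitE_add_ne_zero (i : Fin 8) (s : Energy) : (unitE i + s) i ≠ 0 := by
  rw [unitE_add_self]; exact enat_one_add_ne_zero _

/-- Decrementing `unitE i + s` at `i` dominates `s`. -/
lemma energy_dec (i : Fin 8) (s : Energy) :
    s ≤ fun k => if k = i then (unitE i + s) k - 1 else (unitE i + s) k := by
  intro k
  by_cases h : k = i
  · subst h; simp only [if_pos rfl, unitE_add_self, enat_one_add_sub_one]; exact le_rfl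
  · simp only [if_neg h, unitE_add_ne s h]; exact le_rfl

/-- Energy bound for positive conjuncts. -/
lemma energy_pos (x : Energy) :
    x ≤ fun k => if k = 0 then
        (x ⊔ onlyAt 5 (x 0)) 0 ⊓ (x ⊔ onlyAt 5 (x 0)) 5
      else (x ⊔ onlyAt 5 (x 0)) k := by
  intro k
  by_cases h : k = 0
  · subst h
    simp only [if_pos rfl]
    refine le_inf ?_ ?_
    · exact le_sup_left.trans_eq (rfl)
    · have : x 0 ≤ (x ⊔ onlyAt 5 (x 0)) 5 := by
        have : (onlyAt 5 (x 0)) 5 = x 0 := by simp [onlyAt]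
        calc x 0 = (onlyAt 5 (x 0)) 5 := this.symm
        _ ≤ (x ⊔ onlyAt 5 (x 0)) 5 := le_sup_right
      exact this
  · simp only [if_neg h]
    exact le_sup_left

lemma energy_neg_ne (x : Energy) : ((unitE 7 + x) ⊔ onlyAt 6 (x 0)) 7 ≠ 0 := by
  intro h
  have h1 : (unitE 7 + x) 7 ≤ ((unitE 7 + x) ⊔ onlyAt 6 (x 0)) 7 := le_sup_left
  rw [h] at h1
  exact unitE_add_ne_zero 7 x (le_antisymm h1 (zero_le))

/-- Energy bound for negative conjuncts. -/
lemma energy_neg (x : Energy) :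
    x ≤ fun k =>
      if k = 0 then ((unitE 7 + x) ⊔ onlyAt 6 (x 0)) 0 ⊓ ((unitE 7 + x) ⊔ onlyAt 6 (x 0)) 6
      else if k = 7 then ((unitE 7 + x) ⊔ onlyAt 6 (x 0)) k - 1
      else ((unitE 7 + x) ⊔ onlyAt 6 (x 0)) k := by
  intro k
  by_cases h0 : k = 0
  · subst h0
    simp only [if_pos rfl]
    refine le_inf ?_ ?_
    · exact le_trans (by rw [unitE_add_ne x (by decide)]) le_sup_left
    · have : (onlyAt 6 (x 0)) 6 = x 0 := by simp [onlyAt]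
      exact le_trans this.symm.le le_sup_right
  · by_cases h7 : k = 7
    · subst h7
      simp only [if_neg h0, if_pos rfl]
      have : (onlyAt 6 (x 0)) 7 = 0 := by simp [onlyAt]
      rw [Pi.sup_apply, this, sup_of_le_left zero_le, unitE_add_self, enat_one_add_sub_one]
      simp
    · simp only [if_neg h0, if_neg h7]
      exact le_trans (by rw [unitE_add_ne x h7]) le_sup_left

end EnergyLemmas

section BranchEnergy

variable (f s : Energy)

/-- The inner supremum in the price of a branching conjunction. -/
def brX (f s : Energy) : Energy := ((unitE 0 + f) ⊔ onlyAt 5 (1 + f 0)) ⊔ s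

/-- The price of a branching conjunction. -/
def brE (f s : Energy) : Energy := (unitE 1 + unitE 2) + brX f s

lemma brX_apply (k : Fin 8) :
    brX f s k = ((unitE 0 + f) k ⊔ onlyAt 5 (1 + f 0) k) ⊔ s k := by
  simp [brX]

lemma brE_apply_ne {k : Fin 8} (h1 : k ≠ 1) (h2 : k ≠ 2) : brE f s k = brX f s k := by
  simp [brE, unitE, h1, h2]

lemma brE_apply_1 : brE f s 1 = 1 + brX f s 1 := by
  simp [brE, unitE]

lemma brE_apply_2 : brE f s 2 = 1 + brX f s 2 := by
  simp [brE, unitE]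

lemma brX_f_le : f ≤ brX f s := by
  intro k
  rw [brX_apply]
  refine le_trans ?_ (le_sup_of_le_left le_sup_left)
  by_cases h : k = 0
  · subst h; rw [unitE_add_self]; exact le_add_self
  · rw [unitE_add_ne f h]

lemma brX_s_le : s ≤ brX f s := le_sup_right

lemma brX_0 : 1 + f 0 ≤ brX f s 0 := by
  rw [brX_apply]
  refine le_trans ?_ (le_sup_of_le_left le_sup_left)
  rw [unitE_add_self]

lemma brX_5 : 1 + f 0 ≤ brX f s 5 := by
  rw [brX_apply]
  refine le_trans ?_ (le_sup_of_le_left le_sup_right)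
  simp [onlyAt]

lemma brE_ne1 : brE f s 1 ≠ 0 := by rw [brE_apply_1]; exact enat_one_add_ne_zero _

lemma brE_ne2 : brE f s 2 ≠ 0 := by rw [brE_apply_2]; exact enat_one_add_ne_zero _

/-- Budget for answers in a branching conjunction. -/
lemma brE_s_le : s ≤ fun k => if k = 1 ∨ k = 2 then brE f s k - 1 else brE f s k := by
  intro k
  simp only
  by_cases h : k = 1 ∨ k = 2
  · rw [if_pos h]
    rcases h with h | h <;> subst h
    · rw [brE_apply_1, enat_one_add_sub_one]; exact brX_s_le f s 1
    · rw [brE_apply_2, enat_one_add_sub_one]; exact brX_s_le f s 2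
  · push_neg at h
    rw [if_neg (by tauto), brE_apply_ne f s h.1 h.2]
    exact brX_s_le f s k

lemma brB0_ne : brE f s 0 ⊓ brE f s 5 ≠ 0 := by
  have h0 : brE f s 0 = brX f s 0 := brE_apply_ne f s (by decide) (by decide)
  have h5 : brE f s 5 = brX f s 5 := brE_apply_ne f s (by decide) (by decide)
  intro h
  rcases min_eq_iff.mp h with ⟨h', _⟩ | ⟨h', _⟩
  · exact enat_ne_zero_mono ((brX_0 f s).trans h0.symm.le) (enat_one_add_ne_zero _) h'
  · exact enat_ne_zero_mono ((brX_5 f s).trans h5.symm.le) (enat_one_add_ne_zero _) h'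

/-- Budget for the branching observation followed by accounting. -/
lemma brE_f_le :
    f ≤ fun k => if k = 0 then
        (fun j => if j = (0 : Fin 8) then brE f s 0 ⊓ brE f s 5
          else if j = 1 ∨ j = 2 then brE f s j - 1 else brE f s j) k - 1
      else (fun j => if j = (0 : Fin 8) then brE f s 0 ⊓ brE f s 5
          else if j = 1 ∨ j = 2 then brE f s j - 1 else brE f s j) k := by
  intro k
  simp only
  by_cases h0 : k = 0
  · subst h0
    rw [if_pos rfl, if_pos rfl]
    have h0' : brE f s 0 = brX f s 0 := brE_apply_ne f s (by decide) (by decide)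
    have h5 : brE f s 5 = brX f s 5 := brE_apply_ne f s (by decide) (by decide)
    have hle : 1 + f 0 ≤ brE f s 0 ⊓ brE f s 5 :=
      le_inf ((brX_0 f s).trans h0'.symm.le) ((brX_5 f s).trans h5.symm.le)
    calc f 0 = 1 + f 0 - 1 := (enat_one_add_sub_one _).symm
    _ ≤ brE f s 0 ⊓ brE f s 5 - 1 := tsub_le_tsub_right hle 1
  · rw [if_neg h0, if_neg h0]
    by_cases h : k = 1 ∨ k = 2
    · rw [if_pos h]
      rcases h with h | h <;> subst h
      · rw [brE_apply_1, enat_one_add_sub_one]; exact brX_f_le f s 1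
      · rw [brE_apply_2, enat_one_add_sub_one]; exact brX_f_le f s 2
    · push_neg at h
      rw [if_neg (by tauto), brE_apply_ne f s h.1 h.2]
      exact brX_f_le f s k

end BranchEnergy

section DirectionOne

variable {Proc Act : Type} {Tr : Proc → Act → Proc → Prop} {τ : Act}

mutual

/-- A distinguishing formula yields an attacker win at its price. -/
theorem winF : ∀ (φ : Formula Act τ) (p : Proc) (Q : Set Proc),
    Sat Tr τ p φ → (∀ q ∈ Q, ¬ Sat Tr τ q φ) →
    (specGame Tr τ).Win (.att p Q) (exprF φ)
  | .delayed χ, p, Q, hp, hQ => by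
      simp only [Sat] at hp
      obtain ⟨p', hs, hp'⟩ := hp
      refine EGame.Win.attack notDef_att (GMove.delay (setStar_clos Q)) (upd_zeroU _) ?_
      have hexpr : exprF (Formula.delayed χ) = exprE χ := by simp only [exprF]
      rw [hexpr]
      refine win_procrastinate hs (winD χ p' (clos Tr τ Q) hp' ?_)
      intro q' hq' hsat
      obtain ⟨q, hqQ, hstar⟩ := hq'
      refine hQ q hqQ ?_
      simp only [Sat]
      exact ⟨q', hstar, hsat⟩
  | .conj I ps, p, Q, hp, hQ => by
      simp only [Sat] at hp
      rcases Set.eq_empty_or_nonempty Q with rfl | ⟨q0, hq0⟩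
      · exact .attack notDef_att GMove.finishing (upd_zeroU _) (win_defC_empty p _)
      · have hI : Nonempty I := by
          by_contra hI
          refine hQ q0 hq0 ?_
          simp only [Sat]
          exact fun i => (hI ⟨i⟩).elim
        have hexpr : exprF (Formula.conj I ps)
            = unitE 4 + (unitE 2 + ⨆ i, exprC (ps i)) := by
          simp only [exprF, iSup_pos hI, add_assoc]
        set s := unitE 2 + ⨆ i, exprC (ps i) with hs
        rw [hexpr]
        refine .attack notDef_att (GMove.immediateConj (Set.nonempty_iff_ne_empty.mp ⟨q0, hq0⟩))
          (upd_decU (unitE_add_ne_zero 4 s)) ?_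
        refine win_mono ?_ _ (energy_dec 4 s)
        refine .defend isDef_defC ?_ ?_
        · intro u g' mv
          cases mv
          rw [upd_decU (unitE_add_ne_zero 2 _)]
          simp
        · intro u g' e' mv
          cases mv with
          | @conjAnswer _ q _ hq =>
          intro hupd
          rw [upd_decU (unitE_add_ne_zero 2 _)] at hupd
          cases Option.some.inj hupd
          have hnq : ¬ ∀ i, SatC Tr τ q (ps i) := by
            have := hQ q hq
            simp only [Sat] at this
            exact this
          obtain ⟨i, hi⟩ := not_forall.mp hnq
          exact win_mono (winC (ps i) p q (hp i) hi) _
            (le_trans (le_iSup (fun i => exprC (ps i)) i) (energy_dec 2 _))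

/-- A delayedly distinguishing delayed formula yields an attacker win at its price. -/
theorem winD : ∀ (χ : DFormula Act τ) (p : Proc) (Q : Set Proc),
    SatD Tr τ p χ → (∀ q ∈ Q, ¬ SatD Tr τ q χ) →
    (specGame Tr τ).Win (.attD p Q) (exprE χ)
  | .obs a ha φ, p, Q, hp, hQ => by
      simp only [SatD] at hp
      obtain ⟨p', hstep, hsat⟩ := hp
      have hexpr : exprE (DFormula.obs a ha φ) = unitE 0 + exprF φ := by simp only [exprE]
      rw [hexpr]
      refine .attack notDef_attD (GMove.observation hstep ha rfl)
        (upd_decU (unitE_add_ne_zero 0 (exprF φ))) ?_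
      refine win_mono (winF φ p' _ hsat ?_) _ (energy_dec 0 (exprF φ))
      intro q' hq' hsatq
      obtain ⟨q, hqQ, hstepq⟩ := hq'
      have := hQ q hqQ
      simp only [SatD] at this
      exact this ⟨q', hstepq, hsatq⟩
  | .conj I ps, p, Q, hp, hQ => by
      simp only [SatD] at hp
      by_cases hI : Nonempty I
      · have hexpr : exprE (DFormula.conj I ps) = unitE 2 + ⨆ i, exprC (ps i) := by
          simp only [exprE, iSup_pos hI]
        rw [hexpr]
        refine .attack notDef_attD GMove.lateConj (upd_zeroU _) ?_
        refine .defend isDef_defC ?_ ?_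
        · intro u g' mv
          cases mv
          rw [upd_decU (unitE_add_ne_zero 2 _)]
          simp
        · intro u g' e' mv
          cases mv with
          | @conjAnswer _ q _ hq =>
          intro hupd
          rw [upd_decU (unitE_add_ne_zero 2 _)] at hupd
          cases Option.some.inj hupd
          have hnq : ¬ ∀ i, SatC Tr τ q (ps i) := by
            have := hQ q hq
            simp only [SatD] at this
            exact this
          obtain ⟨i, hi⟩ := not_forall.mp hnq
          exact win_mono (winC (ps i) p q (hp i) hi) _
            (le_trans (le_iSup (fun i => exprC (ps i)) i) (energy_dec 2 _))
      · have hQe : Q = ∅ := by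
          ext q
          simp only [Set.mem_empty_iff_false, iff_false]
          intro hqQ
          have := hQ q hqQ
          simp only [SatD] at this
          exact this (fun i => (hI ⟨i⟩).elim)
        subst hQe
        exact .attack notDef_attD GMove.lateConj (upd_zeroU _) (win_defC_empty p _)
  | .stableConj I ps, p, Q, hp, hQ => by
      simp only [SatD] at hp
      obtain ⟨hstab, hsat⟩ := hp
      have hexpr : exprE (DFormula.stableConj I ps) = unitE 3 + ⨆ i, exprC (ps i) := by
        simp only [exprE]
      set s := (⨆ i, exprC (ps i) : Energy) with hs
      rw [hexpr]
      refine .attack notDef_attD (GMove.stableConj hstab) (upd_zeroU _) ?_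
      have key : ∀ S : Set Proc, (∀ q, q ∈ S → q ∈ Q ∧ Stable Tr τ q) →
          (specGame Tr τ).Win (.defS p S) (unitE 3 + s) := by
        intro S hmem
        refine .defend isDef_defS ?_ ?_
        · intro u g' mv
          cases mv
          · rw [upd_decU (unitE_add_ne_zero 3 s)]; simp
          · rw [upd_decU (unitE_add_ne_zero 3 s)]; simp
        · intro u g' e' mv
          cases mv with
          | @conjStableAnswer _ q _ hq =>
              intro hupd
              rw [upd_decU (unitE_add_ne_zero 3 s)] at hupd
              cases Option.some.inj hupd
              obtain ⟨hqQ, hqstab⟩ := hmem q hq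
              have hnq : ¬ (Stable Tr τ q ∧ ∀ i, SatC Tr τ q (ps i)) := by
                have := hQ q hqQ
                simp only [SatD] at this
                exact this
              have hex : ∃ i, ¬ SatC Tr τ q (ps i) := by
                by_contra h
                push_neg at h
                exact hnq ⟨hqstab, h⟩
              obtain ⟨i, hi⟩ := hex
              exact win_mono (winC (ps i) p q (hsat i) hi) _
                (le_trans (le_iSup (fun i => exprC (ps i)) i) (energy_dec 3 s))
          | stableFinishing =>
              intro hupd
              rw [upd_decU (unitE_add_ne_zero 3 s)] at hupd
              cases Option.some.inj hupd
              exact win_defC_empty p _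
      exact key _ (fun q hq => ⟨hq.1, hq.2⟩)
  | .branchConj α φa I ps, p, Q, hp, hQ => by
      simp only [SatD] at hp
      obtain ⟨⟨p1, hopt, hsat⟩, hps⟩ := hp
      set f := exprF φa with hf
      set s := (⨆ i, exprC (ps i) : Energy) with hs
      set Qa : Set Proc := {q ∈ Q | ∀ i, SatC Tr τ q (ps i)} with hQa
      have hsub : Qa ⊆ Q := fun q hq => hq.1
      have hexpr : exprE (DFormula.branchConj α φa I ps) = brE f s := by
        simp only [exprE, brE, brX, hf, hs]
      rw [hexpr]
      refine .attack notDef_attD (GMove.branchConj hopt hsub) (upd_zeroU _) ?_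
      refine .defend isDef_defB ?_ ?_
      · intro u g' mv
        cases mv with
        | branchAnswer hq => rw [upd_dec23 (brE_ne1 f s) (brE_ne2 f s)]; simp
        | branchObservation hQ' => rw [upd_minU16dec23 (brE_ne1 f s) (brE_ne2 f s)]; simp
      · intro u g' e' mv
        cases mv with
        | @branchAnswer _ _ q _ _ _ hq =>
            intro hupd
            rw [upd_dec23 (brE_ne1 f s) (brE_ne2 f s)] at hupd
            cases Option.some.inj hupd
            have : ∃ i, ¬ SatC Tr τ q (ps i) := by
              by_contra h
              push_neg at h
              exact hq.2 ⟨hq.1, h⟩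
            obtain ⟨i, hi⟩ := this
            exact win_mono (winC (ps i) p q (hps i) hi) _
              (le_trans (le_iSup (fun i => exprC (ps i)) i) (brE_s_le f s))
        | @branchObservation _ _ _ _ _ Q' hQ'' =>
            intro hupd
            rw [upd_minU16dec23 (brE_ne1 f s) (brE_ne2 f s)] at hupd
            cases Option.some.inj hupd
            refine .attack notDef_attB GMove.branchAccounting (upd_decU ?_) ?_
            · simpa using brB0_ne f s
            · refine win_mono (winF φa p1 Q' hsat ?_) _ (brE_f_le f s)
              intro q' hq' hsatq
              rw [hQ''] at hq'
              obtain ⟨q, hqQa, hstep⟩ := hq'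
              have := hQ q hqQa.1
              simp only [SatD] at this
              exact this ⟨⟨q', hstep, hsatq⟩, hqQa.2⟩

/-- A distinguishing conjunct yields an attacker win at its price. -/
theorem winC : ∀ (ψ : Conjunct Act τ) (p q : Proc),
    SatC Tr τ p ψ → ¬ SatC Tr τ q ψ →
    (specGame Tr τ).Win (.attC p q) (exprC ψ)
  | .pos χ, p, q, hp, hq => by
      simp only [SatC] at hp hq
      obtain ⟨p', hs, hsat⟩ := hp
      have hexpr : exprC (Conjunct.pos χ) = exprE χ ⊔ onlyAt 5 (exprE χ 0) := by
        simp only [exprC]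
      rw [hexpr]
      refine .attack notDef_attC (GMove.posConjunct (setStar_clos {q})) (upd_minU16 _) ?_
      refine win_mono (win_procrastinate hs (winD χ p' (clos Tr τ {q}) hsat ?_)) _
        (energy_pos (exprE χ))
      intro q' hq' hsatq
      obtain ⟨q0, hq0, hstar⟩ := hq'
      cases hq0
      exact hq ⟨q', hstar, hsatq⟩
  | .neg χ, p, q, hp, hq => by
      simp only [SatC] at hp hq
      obtain ⟨q', hs, hsat⟩ := not_not.mp hq
      have hpq : p ≠ q := by
        rintro rfl
        exact hp ⟨q', hs, hsat⟩
      have hexpr : exprC (Conjunct.neg χ) = (unitE 7 + exprE χ) ⊔ onlyAt 6 (exprE χ 0) := by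
        simp only [exprC]
      rw [hexpr]
      refine .attack notDef_attC (GMove.negConjunct (setStar_clos {p}) hpq)
        (upd_minU17dec8 (energy_neg_ne (exprE χ))) ?_
      refine win_mono (win_procrastinate hs (winD χ q' (clos Tr τ {p}) hsat ?_)) _
        (energy_neg (exprE χ))
      intro p' hp' hsatp
      obtain ⟨p0, hp0, hstar⟩ := hp'
      cases hp0
      exact hp ⟨p', hstar, hsatp⟩

end

end DirectionOne

section DirectionTwoAux

lemma upd_some_zeroU {e f : Energy} (h : upd e zeroU = some f) : f = e := by
  rw [upd_zeroU] at h
  exact (Option.some.inj h).symm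

lemma upd_some_decU {e f : Energy} {i : Fin 8} (h : upd e (decU i) = some f) :
    e i ≠ 0 ∧ f = fun k => if k = i then e k - 1 else e k := by
  obtain ⟨c, rfl⟩ := upd_some h
  exact ⟨c i (by simp [decU]), updRes_decU e i⟩

lemma upd_some_minU16 {e f : Energy} (h : upd e minU16 = some f) :
    f = fun k => if k = 0 then e 0 ⊓ e 5 else e k := by
  obtain ⟨c, rfl⟩ := upd_some h
  exact updRes_minU16 e

lemma upd_some_minU17dec8 {e f : Energy} (h : upd e minU17dec8 = some f) :
    e 7 ≠ 0 ∧ f = fun k => if k = 0 then e 0 ⊓ e 6 else if k = 7 then e k - 1 else e k := by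
  obtain ⟨c, rfl⟩ := upd_some h
  exact ⟨c 7 (by simp [minU17dec8]), updRes_minU17dec8 e⟩

lemma upd_some_dec23 {e f : Energy} (h : upd e dec23 = some f) :
    e 1 ≠ 0 ∧ e 2 ≠ 0 ∧ f = fun k => if k = 1 ∨ k = 2 then e k - 1 else e k := by
  obtain ⟨c, rfl⟩ := upd_some h
  exact ⟨c 1 (by simp [dec23]), c 2 (by simp [dec23]), updRes_dec23 e⟩

lemma upd_some_minU16dec23 {e f : Energy} (h : upd e minU16dec23 = some f) :
    e 1 ≠ 0 ∧ e 2 ≠ 0 ∧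
      f = fun k => if k = 0 then e 0 ⊓ e 5 else if k = 1 ∨ k = 2 then e k - 1 else e k := by
  obtain ⟨c, rfl⟩ := upd_some h
  exact ⟨c 1 (by simp [minU16dec23]), c 2 (by simp [minU16dec23]), updRes_minU16dec23 e⟩

/-- Workhorse: absorbing a unit price into a decremented budget. -/
lemma unitE_add_le {i : Fin 8} {x e : Energy} (hi : e i ≠ 0)
    (h : x ≤ fun k => if k = i then e k - 1 else e k) : unitE i + x ≤ e := by
  intro k
  by_cases hk : k = i
  · subst hk
    rw [unitE_add_self]
    have hx : x k ≤ e k - 1 := by simpa using h k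
    calc 1 + x k ≤ 1 + (e k - 1) := add_le_add_right hx 1
    _ = e k := enat_add_sub_one _ hi
  · rw [unitE_add_ne x hk]
    simpa [hk] using h k

lemma energy_pos_rev {x e : Energy} (h : x ≤ fun k => if k = 0 then e 0 ⊓ e 5 else e k) :
    x ⊔ onlyAt 5 (x 0) ≤ e := by
  have h0 : x 0 ≤ e 0 ⊓ e 5 := by simpa using h 0
  intro k
  rw [Pi.sup_apply]
  refine sup_le ?_ ?_
  · by_cases hk : k = 0
    · subst hk; exact h0.trans inf_le_left
    · simpa [hk] using h k
  · by_cases hk : k = 5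
    · subst hk
      simp only [onlyAt, if_pos rfl]
      exact h0.trans inf_le_right
    · simp [onlyAt, hk]

lemma energy_neg_rev {x e : Energy} (h7 : e 7 ≠ 0)
    (h : x ≤ fun k => if k = 0 then e 0 ⊓ e 6 else if k = 7 then e k - 1 else e k) :
    (unitE 7 + x) ⊔ onlyAt 6 (x 0) ≤ e := by
  have h0 : x 0 ≤ e 0 ⊓ e 6 := by simpa using h 0
  intro k
  rw [Pi.sup_apply]
  refine sup_le ?_ ?_
  · by_cases hk : k = 7
    · subst hk
      rw [unitE_add_self]
      have hx : x 7 ≤ e 7 - 1 := by simpa using h 7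
      calc 1 + x 7 ≤ 1 + (e 7 - 1) := add_le_add_right hx 1
      _ = e 7 := enat_add_sub_one _ h7
    · rw [unitE_add_ne x hk]
      by_cases hk0 : k = 0
      · subst hk0; exact (by simpa using h 0 : x 0 ≤ e 0 ⊓ e 6).trans inf_le_left
      · simpa [hk0, hk] using h k
  · by_cases hk : k = 6
    · subst hk
      simp only [onlyAt, if_pos rfl]
      exact h0.trans inf_le_right
    · simp [onlyAt, hk]

lemma energy_branch_rev {f s e : Energy} (h1 : e 1 ≠ 0) (h2 : e 2 ≠ 0)
    (hf : unitE 0 + f ≤ fun k =>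
      if k = 0 then e 0 ⊓ e 5 else if k = 1 ∨ k = 2 then e k - 1 else e k)
    (hs : s ≤ fun k => if k = 1 ∨ k = 2 then e k - 1 else e k) :
    brE f s ≤ e := by
  have hf0 : 1 + f 0 ≤ e 0 ⊓ e 5 := by simpa [unitE] using hf 0
  have hfk : ∀ k : Fin 8, k ≠ 0 → ¬ (k = 1 ∨ k = 2) → f k ≤ e k := by
    intro k hk0 hk12
    simpa [unitE, hk0, hk12] using hf k
  have hsk : ∀ k : Fin 8, ¬ (k = 1 ∨ k = 2) → s k ≤ e k := by
    intro k hk12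
    simpa [hk12] using hs k
  intro k
  by_cases hk1 : k = 1
  · subst hk1
    rw [brE_apply_1]
    have hb : brX f s 1 ≤ e 1 - 1 := by
      rw [brX_apply]
      refine sup_le (sup_le ?_ ?_) ?_
      · rw [unitE_add_ne f (by decide)]
        simpa [unitE] using hf 1
      · simp [onlyAt]
      · simpa using hs 1
    calc 1 + brX f s 1 ≤ 1 + (e 1 - 1) := add_le_add_right hb 1
    _ = e 1 := enat_add_sub_one _ h1
  · by_cases hk2 : k = 2
    · subst hk2
      rw [brE_apply_2]
      have hb : brX f s 2 ≤ e 2 - 1 := by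
        rw [brX_apply]
        refine sup_le (sup_le ?_ ?_) ?_
        · rw [unitE_add_ne f (by decide)]
          simpa [unitE] using hf 2
        · simp [onlyAt]
        · simpa using hs 2
      calc 1 + brX f s 2 ≤ 1 + (e 2 - 1) := add_le_add_right hb 1
      _ = e 2 := enat_add_sub_one _ h2
    · rw [brE_apply_ne f s hk1 hk2, brX_apply]
      have hk12 : ¬ (k = 1 ∨ k = 2) := by tauto
      by_cases hk0 : k = 0
      · subst hk0
        refine sup_le (sup_le ?_ ?_) ?_
        · rw [unitE_add_self]
          exact hf0.trans inf_le_left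
        · simp [onlyAt]
        · exact hsk 0 (by decide)
      · by_cases hk5 : k = 5
        · subst hk5
          refine sup_le (sup_le ?_ ?_) ?_
          · rw [unitE_add_ne f (by decide)]
            exact hfk 5 (by decide) (by decide)
          · simp only [onlyAt, if_pos rfl]
            exact hf0.trans inf_le_right
          · exact hsk 5 (by decide)
        · refine sup_le (sup_le ?_ ?_) ?_
          · rw [unitE_add_ne f hk0]
            exact hfk k hk0 hk12
          · simp [onlyAt, hk5]
          · exact hsk k hk12

end DirectionTwoAux

section DirectionTwo

variable {Proc Act : Type} {Tr : Proc → Act → Proc → Prop} {τ : Act}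

/-- The invariant proved for each position by induction on winning budgets. -/
def post (Tr : Proc → Act → Proc → Prop) (τ : Act) : GPos Proc Act → Energy → Prop
  | .att p Q, e => ∃ φ : Formula Act τ, exprF φ ≤ e ∧ Distinguishes Tr τ φ p Q
  | .attD p Q, e => ∃ χ : DFormula Act τ, exprE χ ≤ e ∧
      (∃ p', Star Tr τ p p' ∧ SatD Tr τ p' χ) ∧ ∀ q ∈ Q, ¬ SatD Tr τ q χ
  | .attC p q, e => ∃ ψ : Conjunct Act τ, exprC ψ ≤ e ∧ DistinguishesC Tr τ ψ p q
  | .attB p Q, e => ∃ φ : Formula Act τ, unitE 0 + exprF φ ≤ e ∧ Distinguishes Tr τ φ p Q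
  | .defC p Q, e => ∃ ψs : {q // q ∈ Q} → Conjunct Act τ,
      (∀ qq : {q // q ∈ Q}, DistinguishesC Tr τ (ψs qq) p qq.1) ∧
      exprE (DFormula.conj {q // q ∈ Q} ψs) ≤ e
  | .defS p Q, e => ∃ ψs : {q // q ∈ Q} → Conjunct Act τ,
      (∀ qq : {q // q ∈ Q}, DistinguishesC Tr τ (ψs qq) p qq.1) ∧
      unitE 3 + (⨆ qq : {q // q ∈ Q}, exprC (ψs qq)) ≤ e
  | .defB p α p' Q Qa, e => ∃ (φa : Formula Act τ) (ψs : {q // q ∈ Q} → Conjunct Act τ),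
      Distinguishes Tr τ φa p' {q' | ∃ q ∈ Qa, OptStep Tr τ q α q'} ∧
      (∀ qq : {q // q ∈ Q}, DistinguishesC Tr τ (ψs qq) p qq.1) ∧
      exprE (DFormula.branchConj α φa {q // q ∈ Q} ψs) ≤ e

theorem win_post {g : GPos Proc Act} {e : Energy}
    (h : (specGame Tr τ).Win g e) : post Tr τ g e := by
  induction h with
  | @attack g u g' e f hnd mv hupd hw ih =>
      cases mv with
      | @delay p Q Q' hQQ' =>
          obtain rfl := upd_some_zeroU hupd
          obtain ⟨χ, hle, ⟨p', hs, hsat⟩, hQ'⟩ := ih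
          refine ⟨.delayed χ, ?_, ?_, ?_⟩
          · simpa only [exprF] using hle
          · simp only [Sat]; exact ⟨p', hs, hsat⟩
          · intro q hq hSat
            simp only [Sat] at hSat
            obtain ⟨q', hstar, hsat'⟩ := hSat
            exact hQ' q' (by rw [hQQ']; exact ⟨q, hq, hstar⟩) hsat'
      | @procrastination p p' Q hstep hne =>
          obtain rfl := upd_some_zeroU hupd
          obtain ⟨χ, hle, ⟨p'', hs, hsat⟩, hQ'⟩ := ih
          exact ⟨χ, hle, ⟨p'', Relation.ReflTransGen.head hstep hs, hsat⟩, hQ'⟩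
      | @observation p p' a Q Q' hTr ha hQstep =>
          obtain ⟨h0, rfl⟩ := upd_some_decU hupd
          obtain ⟨φ, hle, hd⟩ := ih
          refine ⟨.obs a ha φ, ?_, ?_, ?_⟩
          · have hx : exprE (DFormula.obs a ha φ) = unitE 0 + exprF φ := by simp only [exprE]
            rw [hx]; exact unitE_add_le h0 hle
          · refine ⟨p, Relation.ReflTransGen.refl, ?_⟩
            simp only [SatD]; exact ⟨p', hTr, hd.1⟩
          · intro q hq hSatD
            simp only [SatD] at hSatD
            obtain ⟨q', hTr', hsat'⟩ := hSatD
            exact hd.2 q' (by rw [hQstep]; exact ⟨q, hq, hTr'⟩) hsat'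
      | @finishing p =>
          obtain rfl := upd_some_zeroU hupd
          obtain ⟨ψs, hdist, hpr⟩ := ih
          refine ⟨.conj {q // q ∈ (∅ : Set Proc)} ψs, ?_, ?_, ?_⟩
          · have hni : ¬ Nonempty {q // q ∈ (∅ : Set Proc)} := fun ⟨qq⟩ => qq.2
            simp only [exprF, iSup_neg hni]; exact bot_le
          · simp only [Sat]; exact fun qq => (hdist qq).1
          · intro q hq; exact absurd hq (Set.notMem_empty q)
      | @immediateConj p Q hQne =>
          obtain ⟨h4, rfl⟩ := upd_some_decU hupd
          obtain ⟨ψs, hdist, hpr⟩ := ih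
          refine ⟨.conj {q // q ∈ Q} ψs, ?_, ?_, ?_⟩
          · by_cases hne : Nonempty {q // q ∈ Q}
            · simp only [exprF, iSup_pos hne]
              simp only [exprE, iSup_pos hne] at hpr
              rw [add_assoc]
              exact unitE_add_le h4 hpr
            · simp only [exprF, iSup_neg hne]; exact bot_le
          · simp only [Sat]; exact fun qq => (hdist qq).1
          · intro q hq hSat
            simp only [Sat] at hSat
            exact (hdist ⟨q, hq⟩).2 (hSat ⟨q, hq⟩)
      | @lateConj p Q =>
          obtain rfl := upd_some_zeroU hupd
          obtain ⟨ψs, hdist, hpr⟩ := ih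
          refine ⟨.conj {q // q ∈ Q} ψs, hpr, ⟨p, Relation.ReflTransGen.refl, ?_⟩, ?_⟩
          · simp only [SatD]; exact fun qq => (hdist qq).1
          · intro q hq hSatD
            simp only [SatD] at hSatD
            exact (hdist ⟨q, hq⟩).2 (hSatD ⟨q, hq⟩)
      | @posConjunct p q Q' hstarQ =>
          obtain rfl := upd_some_minU16 hupd
          obtain ⟨χ, hle, ⟨p', hs, hsat⟩, hQ'side⟩ := ih
          refine ⟨.pos χ, ?_, ?_, ?_⟩
          · have hx : exprC (Conjunct.pos χ) = exprE χ ⊔ onlyAt 5 (exprE χ 0) := by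
              simp only [exprC]
            rw [hx]; exact energy_pos_rev hle
          · simp only [SatC]; exact ⟨p', hs, hsat⟩
          · simp only [SatC]
            rintro ⟨q', hstar, hsat'⟩
            exact hQ'side q' (by rw [hstarQ]; exact ⟨q, rfl, hstar⟩) hsat'
      | @negConjunct p q P' hstarP hpq =>
          obtain ⟨h7, rfl⟩ := upd_some_minU17dec8 hupd
          obtain ⟨χ, hle, ⟨q', hs, hsat⟩, hPside⟩ := ih
          refine ⟨.neg χ, ?_, ?_, ?_⟩
          · have hx : exprC (Conjunct.neg χ)
                = (unitE 7 + exprE χ) ⊔ onlyAt 6 (exprE χ 0) := by simp only [exprC]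
            rw [hx]; exact energy_neg_rev h7 hle
          · simp only [SatC]
            rintro ⟨p', hstar, hsat'⟩
            exact hPside p' (by rw [hstarP]; exact ⟨p, rfl, hstar⟩) hsat'
          · simp only [SatC]
            exact not_not_intro ⟨q', hs, hsat⟩
      | @stableConj p Q hstab =>
          obtain rfl := upd_some_zeroU hupd
          obtain ⟨ψs, hdist, hpr⟩ := ih
          refine ⟨.stableConj _ ψs, ?_, ⟨p, Relation.ReflTransGen.refl, ?_⟩, ?_⟩
          · simp only [exprE]; exact hpr
          · simp only [SatD]; exact ⟨hstab, fun qq => (hdist qq).1⟩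
          · intro q hq hSatD
            simp only [SatD] at hSatD
            obtain ⟨hstabq, hall⟩ := hSatD
            exact (hdist ⟨q, ⟨hq, hstabq⟩⟩).2 (hall ⟨q, ⟨hq, hstabq⟩⟩)
      | @branchConj p p1 α Q Qa hopt hsub =>
          obtain rfl := upd_some_zeroU hupd
          obtain ⟨φa, ψs, hdista, hdist, hpr⟩ := ih
          refine ⟨.branchConj α φa _ ψs, hpr, ⟨p, Relation.ReflTransGen.refl, ?_⟩, ?_⟩
          · simp only [SatD]
            exact ⟨⟨p1, hopt, hdista.1⟩, fun qq => (hdist qq).1⟩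
          · intro q hq hSatD
            simp only [SatD] at hSatD
            obtain ⟨⟨q'', hstep, hsat⟩, hall⟩ := hSatD
            by_cases hqa : q ∈ Qa
            · exact hdista.2 q'' ⟨q, hqa, hstep⟩ hsat
            · exact (hdist ⟨q, ⟨hq, hqa⟩⟩).2 (hall ⟨q, ⟨hq, hqa⟩⟩)
      | @branchAccounting p Q =>
          obtain ⟨h0, rfl⟩ := upd_some_decU hupd
          obtain ⟨φ, hle, hd⟩ := ih
          exact ⟨φ, unitE_add_le h0 hle, hd⟩
      | @conjAnswer p q Q hq => exact (hnd trivial).elim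
      | @conjStableAnswer p q Q hq => exact (hnd trivial).elim
      | @stableFinishing p => exact (hnd trivial).elim
      | @branchAnswer p p1 q α Q Qa hq => exact (hnd trivial).elim
      | @branchObservation p p1 α Q Qa Q' hQ' => exact (hnd trivial).elim
  | @defend g e hd hdef hwin ih =>
      cases g with
      | att p Q => exact (hd : False).elim
      | attD p Q => exact (hd : False).elim
      | attC p q => exact (hd : False).elim
      | attB p Q => exact (hd : False).elim
      | defC p Q =>
          rcases Set.eq_empty_or_nonempty Q with rfl | ⟨q0, hq0⟩
          · refine ⟨fun qq => absurd qq.2 (Set.notMem_empty _), fun qq => absurd qq.2 (Set.notMem_empty _), ?_⟩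
            have hni : ¬ Nonempty {q // q ∈ (∅ : Set Proc)} := fun ⟨qq⟩ => qq.2
            simp only [exprE, iSup_neg hni]; exact bot_le
          · obtain ⟨f, hf⟩ := upd_ne_none (hdef _ _ (GMove.conjAnswer hq0))
            obtain ⟨h2, rfl⟩ := upd_some_decU hf
            have H : ∀ qq : {q // q ∈ Q}, ∃ ψ : Conjunct Act τ,
                exprC ψ ≤ (fun k => if k = 2 then e k - 1 else e k) ∧
                DistinguishesC Tr τ ψ p qq.1 :=
              fun qq => ih _ _ _ (GMove.conjAnswer qq.2) hf
            choose ψs h1 hdist using H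
            refine ⟨ψs, hdist, ?_⟩
            have hne : Nonempty {q // q ∈ Q} := ⟨⟨q0, hq0⟩⟩
            simp only [exprE, iSup_pos hne]
            exact unitE_add_le h2 (iSup_le h1)
      | defS p Q =>
          rcases Set.eq_empty_or_nonempty Q with rfl | ⟨q0, hq0⟩
          · obtain ⟨f, hf⟩ := upd_ne_none (hdef _ _ GMove.stableFinishing)
            obtain ⟨h3, rfl⟩ := upd_some_decU hf
            haveI : IsEmpty {q // q ∈ (∅ : Set Proc)} := ⟨fun qq => qq.2⟩
            refine ⟨fun qq => absurd qq.2 (Set.notMem_empty _), fun qq => absurd qq.2 (Set.notMem_empty _), ?_⟩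
            rw [iSup_of_empty]
            exact unitE_add_le h3 bot_le
          · obtain ⟨f, hf⟩ := upd_ne_none (hdef _ _ (GMove.conjStableAnswer hq0))
            obtain ⟨h3, rfl⟩ := upd_some_decU hf
            have H : ∀ qq : {q // q ∈ Q}, ∃ ψ : Conjunct Act τ,
                exprC ψ ≤ (fun k => if k = 3 then e k - 1 else e k) ∧
                DistinguishesC Tr τ ψ p qq.1 :=
              fun qq => ih _ _ _ (GMove.conjStableAnswer qq.2) hf
            choose ψs h1 hdist using H
            exact ⟨ψs, hdist, unitE_add_le h3 (iSup_le h1)⟩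
      | defB p α p1 Q Qa =>
          obtain ⟨fB, hfB⟩ := upd_ne_none (hdef _ _ (GMove.branchObservation rfl))
          obtain ⟨h1, h2, rfl⟩ := upd_some_minU16dec23 hfB
          obtain ⟨φa, hφa, hdista⟩ := ih _ _ _ (GMove.branchObservation rfl) hfB
          have Hs : ∀ qq : {q // q ∈ Q}, ∃ ψ : Conjunct Act τ,
              exprC ψ ≤ (fun k => if k = 1 ∨ k = 2 then e k - 1 else e k) ∧
              DistinguishesC Tr τ ψ p qq.1 := by
            intro qq
            obtain ⟨fA, hfA⟩ := upd_ne_none (hdef _ _ (GMove.branchAnswer qq.2))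
            obtain ⟨_, _, rfl⟩ := upd_some_dec23 hfA
            exact ih _ _ _ (GMove.branchAnswer qq.2) hfA
          choose ψs hsle hdist using Hs
          refine ⟨φa, ψs, hdista, hdist, ?_⟩
          have hexpr : exprE (DFormula.branchConj α φa {q // q ∈ Q} ψs)
              = brE (exprF φa) (⨆ qq : {q // q ∈ Q}, exprC (ψs qq)) := by
            simp only [exprE, brE, brX]
          rw [hexpr]
          exact energy_branch_rev h1 h2 hφa (iSup_le hsle)

end DirectionTwo


/-- correctness of the weak spectroscopy game: there is a formula
of price at most `e` distinguishing `p` from `Q` iff the attacker wins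
`[p,Q]_a` with budget `e`. -/
theorem spectroscopy_correctness {Proc Act : Type} (Tr : Proc → Act → Proc → Prop)
    (τ : Act) (e : Energy) (p : Proc) (Q : Set Proc) :
    (∃ φ : Formula Act τ, exprF φ ≤ e ∧ Distinguishes Tr τ φ p Q) ↔
      (specGame Tr τ).Win (.att p Q) e := by
  constructor
  · rintro ⟨φ, hle, hsat, hq⟩
    exact win_mono (winF φ p Q hsat hq) e hle
  · intro h
    exact win_post h

end Spectroscopy
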